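/- Let f : ℝ^d → ℝ be differentiable with L-Lipschitz gradient and infimum f_* > -∞, and fix x ∈ ℝ^d. Let (Ω, μ) and (Ω', μ') be probability spaces. Let g : Ω → ℝ^d be square-integrable with ∫ g dμ = ∇f(x) and ∫ ‖g − ∇f(x)‖₂² dμ ≤ 𝓛σ. Let 𝒞 : ℝ^d × Ω' → ℝ^d be measurable with ∫ 𝒞(y, ·) dμ' = y and ∫ ‖𝒞(y, ·) − y‖₂² dμ' ≤ ω·‖y‖₂² for every y ∈ ℝ^d, where ω ≥ 0. Then ∫∫ ‖𝒞(g(ω), ω') − ∇f(x)‖₂² dμ'(ω') dμ(ω) ≤ 2ωL·(f(x) − f_*) + (ω + 1)·𝓛σ. -/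

import Mathlib

open MeasureTheory

section Aux

variable {E : Type*} [NormedAddCommGroup E] [InnerProductSpace ℝ E] [CompleteSpace E]

local notation "⟪" x ", " y "⟫" => @inner ℝ _ _ x y

/-- Shifted second moment decomposition on a probability space. -/
lemma shift_second_moment {Ω : Type*} [MeasurableSpace Ω] (μ : Measure Ω)
    [IsProbabilityMeasure μ] (h : Ω → E) (hh : Integrable h μ)
    (hh2 : Integrable (fun ω => ‖h ω - ∫ ω, h ω ∂μ‖ ^ 2) μ) (b : E) :
    ∫ ω, ‖h ω - b‖ ^ 2 ∂μ
      = ∫ ω, ‖h ω - ∫ ω, h ω ∂μ‖ ^ 2 ∂μ + ‖(∫ ω, h ω ∂μ) - b‖ ^ 2 := by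
  set m := ∫ ω, h ω ∂μ with hm
  have hint : Integrable (fun ω => ⟪h ω - m, m - b⟫) μ :=
    (hh.sub (integrable_const m)).inner_const (m - b)
  have hexp : ∀ ω, ‖h ω - b‖ ^ 2
      = ‖h ω - m‖ ^ 2 + 2 * ⟪h ω - m, m - b⟫ + ‖m - b‖ ^ 2 := by
    intro ω
    have hrw : h ω - b = (h ω - m) + (m - b) := by abel
    rw [hrw, norm_add_sq_real]
  calc ∫ ω, ‖h ω - b‖ ^ 2 ∂μ
      = ∫ ω, (‖h ω - m‖ ^ 2 + 2 * ⟪h ω - m, m - b⟫ + ‖m - b‖ ^ 2) ∂μ := by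
        simp_rw [hexp]
    _ = (∫ ω, ‖h ω - m‖ ^ 2 ∂μ) + 2 * (∫ ω, ⟪h ω - m, m - b⟫ ∂μ) + ‖m - b‖ ^ 2 := by
        rw [integral_add (f := fun ω => ‖h ω - m‖ ^ 2 + 2 * ⟪h ω - m, m - b⟫)
            (g := fun _ => ‖m - b‖ ^ 2) (hh2.add (hint.const_mul 2)) (integrable_const _),
          integral_add hh2 (hint.const_mul 2), integral_const_mul, integral_const]
        simp
    _ = (∫ ω, ‖h ω - m‖ ^ 2 ∂μ) + ‖m - b‖ ^ 2 := by
        have hz : ∫ ω, ⟪h ω - m, m - b⟫ ∂μ = ⟪m - b, (∫ ω, (h ω - m) ∂μ)⟫ := by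
          rw [← integral_inner (f := fun ω => h ω - m) (hh.sub (integrable_const m)) (m - b)]
          exact integral_congr_ae (Filter.Eventually.of_forall fun ω => real_inner_comm _ _)
        rw [hz, integral_sub hh (integrable_const m), integral_const]
        simp
        rw [← hm, sub_self, inner_zero_right]

/-- Descent lemma for L-smooth functions. -/
lemma descent_lemma (f : E → ℝ) (L : ℝ) (hL : 0 < L) (hf : Differentiable ℝ f)
    (hlip : LipschitzWith L.toNNReal (fun x => gradient f x)) (x y : E) :
    f y ≤ f x + ⟪gradient f x, y - x⟫ + L / 2 * ‖y - x‖ ^ 2 := by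
  set v := y - x with hv
  set φ : ℝ → ℝ := fun t => f (x + t • v) - t * ⟪gradient f x, v⟫ - L / 2 * t ^ 2 * ‖v‖ ^ 2
    with hφ
  have hc : ∀ t : ℝ, HasDerivAt (fun t : ℝ => x + t • v) v t := by
    intro t
    simpa using ((hasDerivAt_id t).smul_const v).const_add x
  have hφ' : ∀ t : ℝ, HasDerivAt φ
      (⟪gradient f (x + t • v), v⟫ - ⟪gradient f x, v⟫ - L / 2 * (2 * t) * ‖v‖ ^ 2) t := by
    intro t
    have h1 : HasDerivAt (fun t : ℝ => f (x + t • v)) ⟪gradient f (x + t • v), v⟫ t := by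
      have := ((hf (x + t • v)).hasGradientAt.hasFDerivAt).comp_hasDerivAt t (hc t)
      exact this
    have h2 : HasDerivAt (fun t : ℝ => t * ⟪gradient f x, v⟫) ⟪gradient f x, v⟫ t := by
      simpa using (hasDerivAt_id t).mul_const (⟪gradient f x, v⟫)
    have h3 : HasDerivAt (fun t : ℝ => L / 2 * t ^ 2 * ‖v‖ ^ 2)
        (L / 2 * (2 * t) * ‖v‖ ^ 2) t := by
      have := ((hasDerivAt_pow 2 t).const_mul (L / 2)).mul_const (‖v‖ ^ 2)
      simpa [mul_comm, mul_assoc, mul_left_comm] using this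
    exact (h1.sub h2).sub h3
  have hdiff : Differentiable ℝ φ := fun t => (hφ' t).differentiableAt
  have hmono : AntitoneOn φ (Set.Icc 0 1) := by
    apply antitoneOn_of_deriv_nonpos (convex_Icc 0 1) hdiff.continuous.continuousOn
      (fun t _ => (hdiff t).differentiableWithinAt)
    intro t ht
    rw [interior_Icc] at ht
    rw [(hφ' t).deriv]
    have hsub : ⟪gradient f (x + t • v), v⟫ - ⟪gradient f x, v⟫
        = ⟪gradient f (x + t • v) - gradient f x, v⟫ := (inner_sub_left _ _ _).symm
    have hb : ⟪gradient f (x + t • v) - gradient f x, v⟫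
        ≤ ‖gradient f (x + t • v) - gradient f x‖ * ‖v‖ := real_inner_le_norm _ _
    have hlb : ‖gradient f (x + t • v) - gradient f x‖ ≤ L * (t * ‖v‖) := by
      have hd := hlip.dist_le_mul (x + t • v) x
      simp only [dist_eq_norm, add_sub_cancel_left] at hd
      calc ‖gradient f (x + t • v) - gradient f x‖ ≤ L.toNNReal * ‖t • v‖ := hd
        _ = L * (t * ‖v‖) := by
            rw [Real.coe_toNNReal L hL.le, norm_smul, Real.norm_eq_abs,
              abs_of_nonneg ht.1.le]
    rw [hsub]
    nlinarith [norm_nonneg v, norm_nonneg (gradient f (x + t • v) - gradient f x)]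
  have h01 : φ 1 ≤ φ 0 :=
    hmono (Set.mem_Icc.2 ⟨le_refl 0, zero_le_one⟩) (Set.mem_Icc.2 ⟨zero_le_one, le_refl 1⟩)
      zero_le_one
  have e0 : φ 0 = f x := by simp [hφ]
  have e1 : φ 1 = f y - ⟪gradient f x, v⟫ - L / 2 * ‖v‖ ^ 2 := by
    simp [hφ, hv]
  rw [e0, e1] at h01
  linarith

/-- Norm-squared of the gradient is bounded by suboptimality. -/
lemma grad_sq_le_suboptimality (f : E → ℝ) (L : ℝ) (hL : 0 < L) (hf : Differentiable ℝ f)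
    (hlip : LipschitzWith L.toNNReal (fun x => gradient f x)) (fstar : ℝ)
    (hglb : IsGLB (Set.range f) fstar) (x : E) :
    ‖gradient f x‖ ^ 2 ≤ 2 * L * (f x - fstar) := by
  set y := x - L⁻¹ • gradient f x with hy
  have hd := descent_lemma f L hL hf hlip x y
  have hyx : y - x = -(L⁻¹ • gradient f x) := by rw [hy]; abel
  have hinner : ⟪gradient f x, y - x⟫ = -(L⁻¹ * ‖gradient f x‖ ^ 2) := by
    rw [hyx, inner_neg_right, real_inner_smul_right, real_inner_self_eq_norm_sq]
  have hnorm : ‖y - x‖ ^ 2 = L⁻¹ ^ 2 * ‖gradient f x‖ ^ 2 := by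
    rw [hyx, norm_neg, norm_smul, Real.norm_eq_abs, abs_of_nonneg (inv_nonneg.2 hL.le),
      mul_pow]
  have hfy : fstar ≤ f y := hglb.1 ⟨y, rfl⟩
  rw [hinner, hnorm] at hd
  have hLinv : L * L⁻¹ = 1 := mul_inv_cancel₀ hL.ne'
  set G := ‖gradient f x‖ ^ 2 with hG
  have e : L / 2 * (L⁻¹ ^ 2 * G) = L⁻¹ * G / 2 := by
    field_simp
  have h4 : L⁻¹ * G ≤ 2 * (f x - fstar) := by
    rw [e] at hd
    linarith
  calc G = L * (L⁻¹ * G) := by rw [← mul_assoc, hLinv, one_mul]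
    _ ≤ L * (2 * (f x - fstar)) := mul_le_mul_of_nonneg_left h4 hL.le
    _ = 2 * L * (f x - fstar) := by ring

end Aux

local notation "⟪" x ", " y "⟫" => @inner ℝ _ _ x y

/-- Second-moment bound for an unbiasedly compressed stochastic gradient (key step
in the proof of Theorem 3.5): if `g` is an unbiased stochastic gradient at `x` with
variance bounded by `𝓛σ`, and `𝒞` is an unbiased compressor with
`E‖𝒞(y) - y‖² ≤ ω ‖y‖²`, then
`E‖𝒞(g) - ∇f(x)‖² ≤ 2 ω L (f x - f_*) + (ω + 1) 𝓛σ`. -/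
theorem compressed_gradient_second_moment
    (d : ℕ) (f : EuclideanSpace ℝ (Fin d) → ℝ) (L : ℝ) (hL : 0 < L)
    (hf : Differentiable ℝ f)
    (hlip : LipschitzWith L.toNNReal (fun x => gradient f x))
    (fstar : ℝ) (hglb : IsGLB (Set.range f) fstar)
    (x : EuclideanSpace ℝ (Fin d))
    (Ω Ω' : Type*) [MeasurableSpace Ω] [MeasurableSpace Ω']
    (μ : Measure Ω) (μ' : Measure Ω')
    [IsProbabilityMeasure μ] [IsProbabilityMeasure μ']
    (g : Ω → EuclideanSpace ℝ (Fin d)) (hg2 : MemLp g 2 μ)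
    (hgmean : ∫ ω, g ω ∂μ = gradient f x)
    (Lσ : ℝ) (hgvar : ∫ ω, ‖g ω - gradient f x‖ ^ 2 ∂μ ≤ Lσ)
    (𝒞 : EuclideanSpace ℝ (Fin d) → Ω' → EuclideanSpace ℝ (Fin d))
    (h𝒞meas : ∀ y, AEStronglyMeasurable (𝒞 y) μ')
    (ω₀ : ℝ) (hω₀ : 0 ≤ ω₀)
    (h𝒞mean : ∀ y, ∫ ω', 𝒞 y ω' ∂μ' = y)
    (h𝒞var : ∀ y, ∫ ω', ‖𝒞 y ω' - y‖ ^ 2 ∂μ' ≤ ω₀ * ‖y‖ ^ 2) :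
    ∫ ω, ∫ ω', ‖𝒞 (g ω) ω' - gradient f x‖ ^ 2 ∂μ' ∂μ
      ≤ 2 * ω₀ * L * (f x - fstar) + (ω₀ + 1) * Lσ := by
  set b := gradient f x with hb
  -- inner bound, pointwise in the sample
  have key : ∀ y : EuclideanSpace ℝ (Fin d),
      ∫ ω', ‖𝒞 y ω' - b‖ ^ 2 ∂μ' ≤ ω₀ * ‖y‖ ^ 2 + ‖y - b‖ ^ 2 := by
    intro y
    by_cases hI : Integrable (fun ω' => ‖𝒞 y ω' - b‖ ^ 2) μ'
    · have hsm : AEStronglyMeasurable (fun ω' => 𝒞 y ω' - b) μ' :=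
        (h𝒞meas y).sub aestronglyMeasurable_const
      have hmem : MemLp (fun ω' => 𝒞 y ω' - b) 2 μ' :=
        (memLp_two_iff_integrable_sq_norm hsm).2 hI
      have hmem' : MemLp (𝒞 y) 2 μ' := by
        have heq : (fun ω' => 𝒞 y ω' - b) + (fun _ => b) = 𝒞 y := by
          funext ω'; simp
        have := hmem.add (memLp_const (E := EuclideanSpace ℝ (Fin d)) (p := 2) (μ := μ') b)
        rwa [heq] at this
      have hint : Integrable (𝒞 y) μ' := hmem'.integrable (by norm_num)
      have hI2 : Integrable (fun ω' => ‖𝒞 y ω' - ∫ ω', 𝒞 y ω' ∂μ'‖ ^ 2) μ' := by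
        rw [h𝒞mean y]
        exact (memLp_two_iff_integrable_sq_norm
          ((h𝒞meas y).sub aestronglyMeasurable_const)).1
          (hmem'.sub (memLp_const y))
      have hdec := shift_second_moment μ' (𝒞 y) hint hI2 b
      rw [h𝒞mean y] at hdec
      rw [hdec]
      exact add_le_add_left (h𝒞var y) _
    · rw [integral_undef hI]
      positivity
  -- integrability facts for `g`
  have hgsq : Integrable (fun ω => ‖g ω‖ ^ 2) μ :=
    (memLp_two_iff_integrable_sq_norm hg2.aestronglyMeasurable).1 hg2
  have hgbsq : Integrable (fun ω => ‖g ω - b‖ ^ 2) μ :=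
    (memLp_two_iff_integrable_sq_norm
      (hg2.aestronglyMeasurable.sub aestronglyMeasurable_const)).1
      (hg2.sub (memLp_const b))
  have hgint : Integrable g μ := hg2.integrable (by norm_num)
  -- bound the outer integral
  have houter : ∫ ω, ∫ ω', ‖𝒞 (g ω) ω' - b‖ ^ 2 ∂μ' ∂μ
      ≤ ∫ ω, (ω₀ * ‖g ω‖ ^ 2 + ‖g ω - b‖ ^ 2) ∂μ := by
    apply integral_mono_of_nonneg
    · exact Filter.Eventually.of_forall fun ω =>
        integral_nonneg fun ω' => by positivity
    · exact (hgsq.const_mul ω₀).add hgbsq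
    · exact Filter.Eventually.of_forall fun ω => key (g ω)
  have hsplit : ∫ ω, (ω₀ * ‖g ω‖ ^ 2 + ‖g ω - b‖ ^ 2) ∂μ
      = ω₀ * (∫ ω, ‖g ω‖ ^ 2 ∂μ) + ∫ ω, ‖g ω - b‖ ^ 2 ∂μ := by
    rw [integral_add (hgsq.const_mul ω₀) hgbsq, integral_const_mul]
  -- second moment of g
  have hg2nd : ∫ ω, ‖g ω‖ ^ 2 ∂μ = (∫ ω, ‖g ω - b‖ ^ 2 ∂μ) + ‖b‖ ^ 2 := by
    have hI2 : Integrable (fun ω => ‖g ω - ∫ ω, g ω ∂μ‖ ^ 2) μ := by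
      rw [hgmean]; exact hgbsq
    have := shift_second_moment μ g hgint hI2 0
    rw [hgmean] at this
    simpa using this
  have hgrad : ‖b‖ ^ 2 ≤ 2 * L * (f x - fstar) :=
    grad_sq_le_suboptimality f L hL hf hlip fstar hglb x
  calc ∫ ω, ∫ ω', ‖𝒞 (g ω) ω' - b‖ ^ 2 ∂μ' ∂μ
      ≤ ω₀ * (∫ ω, ‖g ω‖ ^ 2 ∂μ) + ∫ ω, ‖g ω - b‖ ^ 2 ∂μ := by
        rw [← hsplit]; exact houter
    _ = ω₀ * ((∫ ω, ‖g ω - b‖ ^ 2 ∂μ) + ‖b‖ ^ 2) + ∫ ω, ‖g ω - b‖ ^ 2 ∂μ := by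
        rw [hg2nd]
    _ ≤ 2 * ω₀ * L * (f x - fstar) + (ω₀ + 1) * Lσ := by nlinarith
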